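/- Let J be a real symmetric n×n matrix and let Ω, M, P : ℝ → Matₙ(ℝ) be differentiable matrix-valued functions satisfying M(t) = JΩ(t) + Ω(t)J, Ṁ = [M,Ω] + [P,J], and Ṗ = [P,Ω] for all t. Then for every λ ∈ ℝ and all t₀, t₁ ∈ ℝ, charpoly(P(t₀) + λM(t₀) + λ²J²) = charpoly(P(t₁) + λM(t₁) + λ²J²); that is, the spectral invariants of the Lax matrix L(λ) = P + λM + λ²J² are integrals of motion of the rigid body in a quadratic potential. -/

import Mathlib

open Matrix

/-- Derivative of the determinant of a matrix-valued function, in terms of the adjugate. -/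
lemma my_det_hasDerivAt {n : ℕ} {A : ℝ → Matrix (Fin n) (Fin n) ℝ}
    {A' : Matrix (Fin n) (Fin n) ℝ} {t : ℝ}
    (h : ∀ i j, HasDerivAt (fun s => A s i j) (A' i j) t) :
    HasDerivAt (fun s => (A s).det) (((A t).adjugate * A').trace) t := by
  have key : HasDerivAt (fun s => (A s).det)
      (∑ σ : Equiv.Perm (Fin n), ((Equiv.Perm.sign σ : ℤ) : ℝ) *
        ∑ j, (∏ j' ∈ Finset.univ.erase j, A t (σ j') j') • A' (σ j) j) t := by
    simp only [Matrix.det_apply']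
    exact HasDerivAt.fun_sum fun σ _ =>
      (HasDerivAt.fun_finsetProd (fun j _ => h (σ j) j)).const_mul _
  convert key using 1
  have hcol : ∀ j : Fin n, ((A t).updateCol j (fun i => A' i j)).det
      = ∑ i, (A t).adjugate j i * A' i j := by
    intro j
    rw [← Matrix.cramer_apply, Matrix.cramer_eq_adjugate_mulVec]
    rfl
  have htr : ((A t).adjugate * A').trace
      = ∑ j, ((A t).updateCol j (fun i => A' i j)).det := by
    simp only [Matrix.trace, Matrix.diag, Matrix.mul_apply, hcol]
  rw [htr]
  simp only [Finset.mul_sum]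
  rw [Finset.sum_comm]
  refine Finset.sum_congr rfl fun j _ => ?_
  rw [Matrix.det_apply']
  refine Finset.sum_congr rfl fun σ _ => ?_
  rw [← Finset.mul_prod_erase Finset.univ _ (Finset.mem_univ j)]
  simp only [Matrix.updateCol_apply, if_pos rfl, smul_eq_mul]
  rw [Finset.prod_congr rfl (fun i hi => by
    rw [if_neg (Finset.ne_of_mem_erase hi)])]
  simp only [if_true]
  ring

/-- Evaluation of the characteristic polynomial. -/
lemma my_eval_charpoly {n : ℕ} (A : Matrix (Fin n) (Fin n) ℝ) (x : ℝ) :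
    A.charpoly.eval x = (x • (1 : Matrix (Fin n) (Fin n) ℝ) - A).det := by
  rw [Matrix.charpoly, ← Polynomial.coe_evalRingHom, RingHom.map_det]
  congr 1
  ext i j
  by_cases hij : i = j <;>
    simp [Matrix.charmatrix_apply, Matrix.one_apply, hij]

/-- For the rigid body in a quadratic potential (`M = JΩ + ΩJ`, `Ṁ = [M,Ω] + [P,J]`,
`Ṗ = [P,Ω]`, `J` symmetric), the spectral invariants of the Lax matrix
`L(λ) = P + λM + λ²J²` are integrals of motion: its characteristic polynomial is
independent of time. -/
theorem stmt_3 (n : ℕ) (J : Matrix (Fin n) (Fin n) ℝ) (hJ : Jᵀ = J)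
    (Ω M P : ℝ → Matrix (Fin n) (Fin n) ℝ)
    (hΩ : ∀ i j, Differentiable ℝ fun t => Ω t i j)
    (hMdef : ∀ t, M t = J * Ω t + Ω t * J)
    (hM : ∀ t, ∀ i j, HasDerivAt (fun s => M s i j)
      ((M t * Ω t - Ω t * M t + (P t * J - J * P t)) i j) t)
    (hP : ∀ t, ∀ i j, HasDerivAt (fun s => P s i j)
      ((P t * Ω t - Ω t * P t) i j) t)
    (lam : ℝ) :
    ∀ t₀ t₁ : ℝ, (P t₀ + lam • M t₀ + (lam ^ 2) • J ^ 2).charpoly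
      = (P t₁ + lam • M t₁ + (lam ^ 2) • J ^ 2).charpoly := by
  intro t₀ t₁
  apply Polynomial.funext
  intro x
  rw [my_eval_charpoly, my_eval_charpoly]
  have hasD : ∀ t : ℝ, HasDerivAt
      (fun s => (x • (1 : Matrix (Fin n) (Fin n) ℝ)
        - (P s + lam • M s + (lam ^ 2) • J ^ 2)).det) 0 t := by
    intro t
    set Lt : Matrix (Fin n) (Fin n) ℝ := P t + lam • M t + (lam ^ 2) • J ^ 2 with hLt
    set At : Matrix (Fin n) (Fin n) ℝ := Ω t + lam • J with hAt
    -- the Lax equation L' = [L, A]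
    have hLax : (P t * Ω t - Ω t * P t)
        + lam • (M t * Ω t - Ω t * M t + (P t * J - J * P t))
        = Lt * At - At * Lt := by
      rw [hLt, hAt, hMdef t]
      simp only [mul_add, add_mul, mul_sub, sub_mul, smul_add, smul_sub,
        smul_mul_assoc, mul_smul_comm, smul_smul, pow_two, mul_assoc]
      module
    have entry : ∀ i j, HasDerivAt
        (fun s => (x • (1 : Matrix (Fin n) (Fin n) ℝ)
          - (P s + lam • M s + (lam ^ 2) • J ^ 2)) i j)
        ((-(Lt * At - At * Lt)) i j) t := by
      intro i j
      have h1 : HasDerivAt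
          (fun s => (P s + lam • M s + (lam ^ 2) • J ^ 2) i j)
          ((Lt * At - At * Lt) i j) t := by
        have hd := ((hP t i j).add ((hM t i j).const_mul lam)).add_const
          ((lam ^ 2) * (J ^ 2 : Matrix (Fin n) (Fin n) ℝ) i j)
        have hfun : (fun s => (P s + lam • M s + (lam ^ 2) • J ^ 2) i j)
            = fun s => P s i j + lam * M s i j
              + (lam ^ 2) * (J ^ 2 : Matrix (Fin n) (Fin n) ℝ) i j := by
          funext s; simp [Matrix.add_apply, Matrix.smul_apply]
        rw [hfun]
        refine hd.congr_deriv ?_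
        rw [← hLax]
        simp only [Matrix.add_apply, Matrix.sub_apply, Matrix.smul_apply, smul_eq_mul]
      have h2 := h1.const_sub ((x • (1 : Matrix (Fin n) (Fin n) ℝ)) i j)
      simpa only [Matrix.sub_apply, Matrix.neg_apply] using h2
    have hder := my_det_hasDerivAt entry
    have hB : (x • (1 : Matrix (Fin n) (Fin n) ℝ) - Lt).adjugate * Lt
        = Lt * (x • (1 : Matrix (Fin n) (Fin n) ℝ) - Lt).adjugate := by
      have h0 := ((x • (1 : Matrix (Fin n) (Fin n) ℝ) - Lt).mul_adjugate).trans
        ((x • (1 : Matrix (Fin n) (Fin n) ℝ) - Lt).adjugate_mul).symm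
      simp only [sub_mul, mul_sub, smul_mul_assoc, mul_smul_comm, one_mul, mul_one] at h0
      have := sub_right_injective h0
      exact this.symm
    set B := (x • (1 : Matrix (Fin n) (Fin n) ℝ) - Lt).adjugate with hBdef
    have htr0 : (B * -(Lt * At - At * Lt)).trace = 0 := by
      have e1 : B * -(Lt * At - At * Lt) = B * (At * Lt) - B * (Lt * At) := by
        rw [neg_sub, mul_sub]
      rw [e1, Matrix.trace_sub]
      have e2 : (B * (Lt * At)).trace = (B * (At * Lt)).trace := by
        calc (B * (Lt * At)).trace = ((B * Lt) * At).trace := by rw [mul_assoc]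
          _ = ((Lt * B) * At).trace := by rw [hB]
          _ = (Lt * (B * At)).trace := by rw [mul_assoc]
          _ = ((B * At) * Lt).trace := Matrix.trace_mul_comm _ _
          _ = (B * (At * Lt)).trace := by rw [mul_assoc]
      rw [e2, sub_self]
    rw [← htr0]
    exact hder
  have hdiff : Differentiable ℝ (fun s : ℝ => (x • (1 : Matrix (Fin n) (Fin n) ℝ)
      - (P s + lam • M s + (lam ^ 2) • J ^ 2)).det) :=
    fun t => (hasD t).differentiableAt
  have := is_const_of_deriv_eq_zero hdiff (fun t => (hasD t).deriv) t₀ t₁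
  simpa using this
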